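/- Assume |W| ≤ K almost surely and θ_0 = sup{θ ≥ 0 : E[e^{θτ}] < ∞} < ∞. Then for every β > 0, m ∈ ℝ, and α ∈ (0,1], one has β Λ*(α/β, m/β) + (1−α) θ_0 ≥ β Λ*(1/β, m/β), where Λ* is the Legendre transform of (x,y) ↦ log E[e^{xτ + yW}]. Consequently inf_{α∈(0,1]} { β Λ*(α/β, m/β) + (1−α) θ_0 } = β Λ*(1/β, m/β). -/

import Mathlib

open MeasureTheory Filter Real Set

noncomputable def elog (x : ENNReal) : EReal :=
  if x = 0 then ⊥ else if x = ⊤ then ⊤ else ((Real.log x.toReal : ℝ) : EReal)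

/-- If `|W| ≤ K` a.s. and `θ₀ = sup {θ ≥ 0 : E[e^{θτ}] < ∞} < ∞`, then for every
`β > 0`, `m ∈ ℝ` and `α ∈ (0,1]`,
`β Λ*(α/β, m/β) + (1−α) θ₀ ≥ β Λ*(1/β, m/β)`, and consequently
`inf_{α ∈ (0,1]} (β Λ*(α/β, m/β) + (1−α) θ₀) = β Λ*(1/β, m/β)`. -/
theorem inf_alpha_beta_cramer
    {Ω : Type*} [MeasurableSpace Ω] (μ : Measure Ω) [IsProbabilityMeasure μ]
    (τ W : Ω → ℝ) (hτ : Measurable τ) (hW : Measurable W)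
    (hτpos : ∀ᵐ ω ∂μ, 0 < τ ω)
    (K : ℝ) (hK : 0 < K) (hWbd : ∀ᵐ ω ∂μ, |W ω| ≤ K)
    (θ₀ : ℝ)
    (hθ₀ : IsLUB {θ : ℝ | 0 ≤ θ ∧
      ∫⁻ ω, ENNReal.ofReal (Real.exp (θ * τ ω)) ∂μ < ⊤} θ₀)
    (Λ : ℝ → ℝ → EReal)
    (hΛ : ∀ x y, Λ x y = elog (∫⁻ ω, ENNReal.ofReal (Real.exp (x * τ ω + y * W ω)) ∂μ))
    (Λstar : ℝ → ℝ → EReal)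
    (hΛstar : ∀ a b, Λstar a b = ⨆ p : ℝ × ℝ, (((a * p.1 + b * p.2 : ℝ) : EReal) - Λ p.1 p.2))
    (β m : ℝ) (hβ : 0 < β) :
    (∀ α ∈ Set.Ioc (0:ℝ) 1,
      (β : EReal) * Λstar (α / β) (m / β) + (((1 - α) * θ₀ : ℝ) : EReal)
        ≥ (β : EReal) * Λstar (1 / β) (m / β)) ∧
    (⨅ α ∈ Set.Ioc (0:ℝ) 1,
        ((β : EReal) * Λstar (α / β) (m / β) + (((1 - α) * θ₀ : ℝ) : EReal)))
      = (β : EReal) * Λstar (1 / β) (m / β) := by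
  have hβ' : β ≠ 0 := ne_of_gt hβ
  -- 0 is in the set, so θ₀ ≥ 0
  have h0mem : (0:ℝ) ∈ {θ : ℝ | 0 ≤ θ ∧
      ∫⁻ ω, ENNReal.ofReal (Real.exp (θ * τ ω)) ∂μ < ⊤} := by
    refine ⟨le_refl 0, ?_⟩
    simp
  have hθ₀nonneg : 0 ≤ θ₀ := hθ₀.1 h0mem
  -- For x > θ₀, Λ x y = ⊤
  have htop : ∀ x y : ℝ, θ₀ < x → Λ x y = ⊤ := by
    intro x y hx
    have hxS : x ∉ {θ : ℝ | 0 ≤ θ ∧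
        ∫⁻ ω, ENNReal.ofReal (Real.exp (θ * τ ω)) ∂μ < ⊤} := by
      intro h
      exact absurd (hθ₀.1 h) (not_le.2 hx)
    have hx0 : 0 ≤ x := le_trans hθ₀nonneg hx.le
    have hint : ∫⁻ ω, ENNReal.ofReal (Real.exp (x * τ ω)) ∂μ = ⊤ := by
      by_contra h
      exact hxS ⟨hx0, lt_top_iff_ne_top.2 h⟩
    have hmeas : Measurable fun ω => ENNReal.ofReal (Real.exp (x * τ ω)) :=
      (Real.measurable_exp.comp (hτ.const_mul x)).ennreal_ofReal
    have hge : ∫⁻ ω, ENNReal.ofReal (Real.exp (-(|y| * K))) *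
        ENNReal.ofReal (Real.exp (x * τ ω)) ∂μ
        ≤ ∫⁻ ω, ENNReal.ofReal (Real.exp (x * τ ω + y * W ω)) ∂μ := by
      apply lintegral_mono_ae
      filter_upwards [hWbd] with ω hω
      rw [← ENNReal.ofReal_mul (le_of_lt (Real.exp_pos _)), ← Real.exp_add]
      apply ENNReal.ofReal_le_ofReal
      apply Real.exp_le_exp.2
      have h1 : |y * W ω| ≤ |y| * K := by
        rw [abs_mul]
        exact mul_le_mul_of_nonneg_left hω (abs_nonneg y)
      have h2 : -(|y| * K) ≤ y * W ω := by
        have := neg_abs_le (y * W ω)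
        linarith
      linarith
    rw [lintegral_const_mul _ hmeas, hint, ENNReal.mul_top
      (ne_of_gt (ENNReal.ofReal_pos.2 (Real.exp_pos _)))] at hge
    have hItop : ∫⁻ ω, ENNReal.ofReal (Real.exp (x * τ ω + y * W ω)) ∂μ = ⊤ :=
      top_le_iff.1 hge
    rw [hΛ, hItop]
    simp [elog]
  -- the key inequality
  have key : ∀ α ∈ Set.Ioc (0:ℝ) 1,
      (β : EReal) * Λstar (α / β) (m / β) + (((1 - α) * θ₀ : ℝ) : EReal)
        ≥ (β : EReal) * Λstar (1 / β) (m / β) := by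
    rintro α ⟨hα0, hα1⟩
    have hc0 : (0:ℝ) ≤ (1 - α) * θ₀ / β :=
      div_nonneg (mul_nonneg (by linarith) hθ₀nonneg) hβ.le
    have hsup : Λstar (1 / β) (m / β) ≤ Λstar (α / β) (m / β)
        + (((1 - α) * θ₀ / β : ℝ) : EReal) := by
      rw [hΛstar, hΛstar]
      apply iSup_le
      intro p
      rcases le_or_gt p.1 θ₀ with hp | hp
      · have hAB : 1 / β * p.1 + m / β * p.2
            ≤ (α / β * p.1 + m / β * p.2) + (1 - α) * θ₀ / β := by
          have h1 : (1 - α) * p.1 ≤ (1 - α) * θ₀ :=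
            mul_le_mul_of_nonneg_left hp (by linarith)
          have h2 : (1 - α) * p.1 / β ≤ (1 - α) * θ₀ / β :=
            div_le_div_of_nonneg_right h1 hβ.le
          have h3 : 1 / β * p.1 - α / β * p.1 = (1 - α) * p.1 / β := by ring
          linarith
        calc ((1 / β * p.1 + m / β * p.2 : ℝ) : EReal) - Λ p.1 p.2
            ≤ (((α / β * p.1 + m / β * p.2) + (1 - α) * θ₀ / β : ℝ) : EReal)
              - Λ p.1 p.2 := by
              rw [sub_eq_add_neg, sub_eq_add_neg]
              exact add_le_add_left (EReal.coe_le_coe_iff.2 hAB) _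
          _ = (((α / β * p.1 + m / β * p.2 : ℝ) : EReal) - Λ p.1 p.2)
              + (((1 - α) * θ₀ / β : ℝ) : EReal) := by
              rw [EReal.coe_add, sub_eq_add_neg, sub_eq_add_neg, add_right_comm, ← sub_eq_add_neg]
          _ ≤ (⨆ q : ℝ × ℝ, (((α / β * q.1 + m / β * q.2 : ℝ) : EReal) - Λ q.1 q.2))
              + (((1 - α) * θ₀ / β : ℝ) : EReal) :=
              add_le_add_left (le_iSup (fun q : ℝ × ℝ =>
                (((α / β * q.1 + m / β * q.2 : ℝ) : EReal) - Λ q.1 q.2)) p) _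
      · rw [htop p.1 p.2 hp, EReal.sub_top]
        exact bot_le
    have hmul : (β : EReal) * Λstar (1 / β) (m / β)
        ≤ (β : EReal) * (Λstar (α / β) (m / β) + (((1 - α) * θ₀ / β : ℝ) : EReal)) :=
      mul_le_mul_of_nonneg_left hsup (by exact_mod_cast hβ.le)
    have hβc : β * ((1 - α) * θ₀ / β) = (1 - α) * θ₀ := by
      field_simp
    have hdist : (β : EReal) * (Λstar (α / β) (m / β) + (((1 - α) * θ₀ / β : ℝ) : EReal))
        = (β : EReal) * Λstar (α / β) (m / β) + (((1 - α) * θ₀ : ℝ) : EReal) := by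
      set a := Λstar (α / β) (m / β) with ha
      clear_value a
      induction a using EReal.rec with
      | bot =>
        rw [EReal.bot_add, EReal.mul_bot_of_pos (by exact_mod_cast hβ), EReal.bot_add]
      | coe r =>
        rw [← EReal.coe_add, ← EReal.coe_mul, ← EReal.coe_mul, ← EReal.coe_add]
        norm_cast
        rw [mul_add, hβc]
      | top =>
        rw [EReal.top_add_coe, EReal.mul_top_of_pos (by exact_mod_cast hβ),
          EReal.top_add_coe]
    rw [hdist] at hmul
    exact hmul
  refine ⟨key, ?_⟩
  apply le_antisymm
  · have h1 : (1:ℝ) ∈ Set.Ioc (0:ℝ) 1 := ⟨zero_lt_one, le_refl 1⟩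
    calc (⨅ α ∈ Set.Ioc (0:ℝ) 1,
          ((β : EReal) * Λstar (α / β) (m / β) + (((1 - α) * θ₀ : ℝ) : EReal)))
        ≤ (β : EReal) * Λstar (1 / β) (m / β) + (((1 - 1) * θ₀ : ℝ) : EReal) :=
          iInf₂_le 1 h1
      _ = (β : EReal) * Λstar (1 / β) (m / β) := by
          norm_num
  · exact le_iInf₂ fun α hα => key α hα
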